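/- arXiv:2511.13416 — 3 statements merged into one kernel-verified Lean document; each statement's English description precedes it below -/
import Mathlib

section
/- For all u > 0 and all θ > 0: sup_{s ∈ (0,u]} √(u/s) · exp( −(θ²/2)·(1/s − 1/u) ) ≤ max( √u/θ, 1 ). -/
open Real Set

/-- For all `u > 0` and `θ > 0`,
`√(u/s) exp(−(θ²/2)(1/s − 1/u)) ≤ max(√u/θ, 1)` for every `s ∈ (0, u]`. -/
theorem sqrt_exp_ratio_sup_bound (u θ : ℝ) (hu : 0 < u) (hθ : 0 < θ) :
    ∀ s ∈ Ioc (0 : ℝ) u,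
      Real.sqrt (u / s) * Real.exp (-(θ ^ 2 / 2) * (1 / s - 1 / u))
        ≤ max (Real.sqrt u / θ) 1 := by
  rintro s ⟨hs, hsu⟩
  set t : ℝ := 1 / s - 1 / u with ht_def
  have ht : 0 ≤ t := sub_nonneg.mpr (one_div_le_one_div_of_le hs hsu)
  have hus : u / s = 1 + u * t := by
    field_simp [ht_def]
    rw [ht_def]; field_simp; ring
  rw [hus]
  have hθ2 : (0:ℝ) < θ ^ 2 := by positivity
  have hexp : 1 + θ ^ 2 * t ≤ Real.exp (θ ^ 2 * t) := by
    have := Real.add_one_le_exp (θ ^ 2 * t); linarith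
  by_cases hc : u ≤ θ ^ 2
  · -- bounded by 1
    refine le_trans ?_ (le_max_right _ _)
    have h1 : 1 + u * t ≤ Real.exp (θ ^ 2 * t) := by
      have : u * t ≤ θ ^ 2 * t := mul_le_mul_of_nonneg_right hc ht
      linarith
    have h2 : Real.sqrt (1 + u * t) ≤ Real.exp (θ ^ 2 * t / 2) := by
      have := Real.sqrt_le_sqrt h1
      rwa [← Real.exp_half] at this
    calc Real.sqrt (1 + u * t) * Real.exp (-(θ ^ 2 / 2) * t)
        ≤ Real.exp (θ ^ 2 * t / 2) * Real.exp (-(θ ^ 2 / 2) * t) :=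
          mul_le_mul_of_nonneg_right h2 (Real.exp_nonneg _)
      _ = 1 := by rw [← Real.exp_add]; ring_nf; simp
  · -- bounded by √u/θ
    push_neg at hc
    refine le_trans ?_ (le_max_left _ _)
    have h1 : 1 + u * t ≤ u / θ ^ 2 * Real.exp (θ ^ 2 * t) := by
      have key : θ ^ 2 / u * (1 + u * t) ≤ Real.exp (θ ^ 2 * t) := by
        have h3 : θ ^ 2 / u * (1 + u * t) = θ ^ 2 / u + θ ^ 2 * t := by
          field_simp
        have h4 : θ ^ 2 / u ≤ 1 := by
          rw [div_le_one hu]; linarith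
        calc θ ^ 2 / u * (1 + u * t) = θ ^ 2 / u + θ ^ 2 * t := h3
          _ ≤ 1 + θ ^ 2 * t := by linarith
          _ ≤ Real.exp (θ ^ 2 * t) := hexp
      have := mul_le_mul_of_nonneg_left key (le_of_lt (by positivity : (0:ℝ) < u / θ ^ 2))
      calc 1 + u * t = u / θ ^ 2 * (θ ^ 2 / u * (1 + u * t)) := by field_simp
        _ ≤ u / θ ^ 2 * Real.exp (θ ^ 2 * t) := this
    have h2 : Real.sqrt (1 + u * t) ≤ Real.sqrt u / θ * Real.exp (θ ^ 2 * t / 2) := by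
      have := Real.sqrt_le_sqrt h1
      rwa [Real.sqrt_mul (by positivity), ← Real.exp_half, Real.sqrt_div hu.le,
        Real.sqrt_sq hθ.le] at this
    calc Real.sqrt (1 + u * t) * Real.exp (-(θ ^ 2 / 2) * t)
        ≤ Real.sqrt u / θ * Real.exp (θ ^ 2 * t / 2) * Real.exp (-(θ ^ 2 / 2) * t) :=
          mul_le_mul_of_nonneg_right h2 (Real.exp_nonneg _)
      _ = Real.sqrt u / θ := by
          rw [mul_assoc, ← Real.exp_add]; ring_nf; simp
end

section
/- For every κ ≥ 0, the integral ∫_0^∞ (1 − √(1+w) · e^{−κw}) / ( w^{3/2} √(1+w) ) dw converges absolutely and equals 2√(πκ) − 2. In particular, for a > 0, b > 0 and x ∈ [0,a], taking κ = b(a−x)²/(2a): √(a/(2πb)) · ∫_0^∞ (1 − √(1+w) e^{−b w (a−x)²/(2a)}) / ( w^{3/2} √(1+w) ) dw = (a − x) − √(2a/(πb)). -/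
open Real Set MeasureTheory Filter Topology

noncomputable def gg (w : ℝ) : ℝ := 1 / (w ^ ((3:ℝ)/2) * Real.sqrt (1+w)) - 1 / (w ^ ((3:ℝ)/2))
noncomputable def FF (w : ℝ) : ℝ := -2 * Real.sqrt w / (1 + Real.sqrt (1+w))

lemma rpow_th {w : ℝ} (hw : 0 < w) : w ^ ((3:ℝ)/2) = w * Real.sqrt w := by
  rw [show (3:ℝ)/2 = 1 + 1/2 by norm_num, Real.rpow_add hw, Real.rpow_one, ← Real.sqrt_eq_rpow]

lemma FF_alg (s t w : ℝ) (hs0 : 0 < s) (ht0 : 0 < t) (hs2 : s^2 = w) (ht2 : t^2 = 1+w) :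
    1/((w*s)*t) - 1/(w*s) = (-2*(1/(2*s))*(1+t) - -2*s*(1/(2*t)))/(1+t)^2 := by
  have hw : 0 < w := hs2 ▸ (by positivity)
  have h1t : (0:ℝ) < 1 + t := by linarith
  field_simp
  ring_nf
  linear_combination (w - 1 - t) * ht2 - w * hs2

lemma FF_hasDeriv {w : ℝ} (hw : 0 < w) : HasDerivAt FF (gg w) w := by
  have hs : HasDerivAt Real.sqrt (1 / (2 * Real.sqrt w)) w := Real.hasDerivAt_sqrt hw.ne'
  have ht : HasDerivAt (fun w : ℝ => 1 + Real.sqrt (1+w)) (1 / (2 * Real.sqrt (1+w))) w := by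
    have h1 : HasDerivAt (fun w : ℝ => 1 + w) 1 w := (hasDerivAt_id w).const_add 1
    have := (Real.hasDerivAt_sqrt (by positivity : (1:ℝ) + w ≠ 0)).comp w h1
    simpa using this.const_add 1
  have hden : (1 + Real.sqrt (1+w)) ≠ 0 := by positivity
  have H := (hs.const_mul (-2)).div ht hden
  refine H.congr_deriv (Eq.symm ?_)
  have hs0 : 0 < Real.sqrt w := Real.sqrt_pos.2 hw
  have ht0 : 0 < Real.sqrt (1+w) := Real.sqrt_pos.2 (by linarith)
  have hs2 : Real.sqrt w ^ 2 = w := Real.sq_sqrt hw.le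
  have ht2 : Real.sqrt (1+w) ^ 2 = 1 + w := Real.sq_sqrt (by linarith)
  have := FF_alg (Real.sqrt w) (Real.sqrt (1+w)) w hs0 ht0 hs2 ht2
  simp only [gg]
  rw [rpow_th hw]
  convert this using 2 <;> ring

lemma FF_cont : Continuous FF := by
  apply Continuous.div
  · fun_prop
  · fun_prop
  · intro w
    have : 0 ≤ Real.sqrt (1+w) := Real.sqrt_nonneg _
    positivity

lemma FF_tendsto : Tendsto FF atTop (𝓝 (-2)) := by
  have hsq : Tendsto Real.sqrt atTop atTop := by
    apply (tendsto_rpow_atTop one_half_pos).congr'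
    filter_upwards [eventually_ge_atTop (0:ℝ)] with w hw
    rw [← Real.sqrt_eq_rpow]
  have h1 : Tendsto (fun w : ℝ => (Real.sqrt w)⁻¹) atTop (𝓝 0) := hsq.inv_tendsto_atTop
  have h2 : Tendsto (fun w : ℝ => Real.sqrt (w⁻¹ + 1)) atTop (𝓝 1) := by
    have : Tendsto (fun w : ℝ => w⁻¹ + 1) atTop (𝓝 (0 + 1)) :=
      tendsto_inv_atTop_zero.add tendsto_const_nhds
    have := (Real.continuous_sqrt.tendsto (0+1)).comp this
    simpa [Function.comp_def] using this
  have h3 : Tendsto (fun w : ℝ => -2 / ((Real.sqrt w)⁻¹ + Real.sqrt (w⁻¹ + 1))) atTop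
      (𝓝 (-2)) := by
    have := (tendsto_const_nhds (x := (-2:ℝ))).div (h1.add h2) (by norm_num)
    simpa [Pi.div_def] using this
  apply h3.congr'
  filter_upwards [eventually_gt_atTop (0:ℝ)] with w hw
  have hs0 : 0 < Real.sqrt w := Real.sqrt_pos.2 hw
  have key : (Real.sqrt w)⁻¹ + Real.sqrt (w⁻¹ + 1) = (1 + Real.sqrt (1+w)) / Real.sqrt w := by
    have : w⁻¹ + 1 = (1+w)/w := by field_simp
    rw [this, Real.sqrt_div (by linarith), add_div]
    congr 1
    · rw [one_div]
  simp only [FF]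
  rw [key, div_div_eq_mul_div]

lemma gg_nonpos {w : ℝ} (hw : 0 < w) : gg w ≤ 0 := by
  have h1 : (0:ℝ) < w ^ ((3:ℝ)/2) := Real.rpow_pos_of_pos hw _
  have h2 : (1:ℝ) ≤ Real.sqrt (1+w) := by
    nlinarith [Real.sq_sqrt (show (0:ℝ) ≤ 1+w by linarith), Real.sqrt_nonneg (1+w)]
  have : w ^ ((3:ℝ)/2) ≤ w ^ ((3:ℝ)/2) * Real.sqrt (1+w) := by nlinarith
  have := one_div_le_one_div_of_le h1 this
  simp only [gg]
  linarith

lemma gg_integrableOn : IntegrableOn gg (Ioi 0) := by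
  exact integrableOn_Ioi_deriv_of_nonpos FF_cont.continuousWithinAt
    (fun x hx => FF_hasDeriv hx) (fun x hx => gg_nonpos hx) FF_tendsto

lemma gg_integral : ∫ w in Ioi (0:ℝ), gg w = -2 := by
  have := integral_Ioi_of_hasDerivAt_of_nonpos FF_cont.continuousWithinAt
    (fun x hx => FF_hasDeriv hx) (fun x hx => gg_nonpos hx) FF_tendsto
  rw [this]
  simp [FF]

noncomputable def hh (κ w : ℝ) : ℝ := (1 - Real.exp (-(κ*w))) / w ^ ((3:ℝ)/2)
noncomputable def EE (κ w : ℝ) : ℝ := Real.exp (-(κ*w)) / Real.sqrt w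

lemma one_sub_exp_nonneg {κ w : ℝ} (hκ : 0 ≤ κ) (hw : 0 ≤ w) :
    0 ≤ 1 - Real.exp (-(κ*w)) := by
  have : Real.exp (-(κ*w)) ≤ 1 := Real.exp_le_one_iff.2 (by nlinarith)
  linarith

lemma one_sub_exp_le {κ w : ℝ} : 1 - Real.exp (-(κ*w)) ≤ κ * w := by
  have := Real.add_one_le_exp (-(κ*w))
  linarith

lemma hh_integrableOn {κ : ℝ} (hκ : 0 ≤ κ) : IntegrableOn (hh κ) (Ioi 0) := by
  have hmeas : ∀ s ⊆ Ioi (0:ℝ), MeasurableSet s → AEStronglyMeasurable (hh κ) (volume.restrict s) := by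
    intro s hs hsm
    have hcont : ContinuousOn (hh κ) (Ioi 0) := by
      apply ContinuousOn.div
      · fun_prop
      · exact continuousOn_id.rpow_const (fun x hx => Or.inl (ne_of_gt hx))
      · intro x hx
        exact ne_of_gt (Real.rpow_pos_of_pos hx _)
    exact ((hcont.mono hs).aestronglyMeasurable hsm)
  rw [← Ioc_union_Ioi_eq_Ioi (zero_le_one (α := ℝ)), integrableOn_union]
  constructor
  · apply Integrable.mono' (g := fun w => κ * w ^ (-(1/2):ℝ))
    · have : IntegrableOn (fun w : ℝ => w ^ (-(1/2):ℝ)) (Ioc 0 1) := by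
        have := (intervalIntegral.intervalIntegrable_rpow' (a := 0) (b := 1)
          (r := -(1/2)) (by norm_num))
        rwa [intervalIntegrable_iff_integrableOn_Ioc_of_le zero_le_one] at this
      exact this.const_mul κ
    · exact hmeas _ (fun x hx => hx.1) measurableSet_Ioc
    · filter_upwards [ae_restrict_mem measurableSet_Ioc] with w hw
      have hw0 : 0 < w := hw.1
      have hnum : 0 ≤ 1 - Real.exp (-(κ*w)) := one_sub_exp_nonneg hκ hw0.le
      have hpow : 0 < w ^ ((3:ℝ)/2) := Real.rpow_pos_of_pos hw0 _
      simp only [hh]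
      rw [Real.norm_eq_abs, abs_of_nonneg (div_nonneg hnum hpow.le)]
      show (1 - Real.exp (-(κ*w))) / w ^ ((3:ℝ)/2) ≤ _
      rw [div_le_iff₀ hpow]
      have hmul : w ^ (-(1/2):ℝ) * w ^ ((3:ℝ)/2) = w := by
        rw [← Real.rpow_add hw0]
        norm_num
      calc 1 - Real.exp (-(κ*w)) ≤ κ * w := one_sub_exp_le
        _ = κ * w ^ (-(1/2):ℝ) * w ^ ((3:ℝ)/2) := by rw [mul_assoc, hmul]
  · apply Integrable.mono' (g := fun w => w ^ (-((3:ℝ)/2)))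
    · exact integrableOn_Ioi_rpow_of_lt (by norm_num) one_pos
    · exact hmeas _ (fun x hx => mem_Ioi.2 (lt_trans one_pos hx)) measurableSet_Ioi
    · filter_upwards [ae_restrict_mem measurableSet_Ioi] with w hw
      have hw0 : (0:ℝ) < w := lt_trans one_pos hw
      have hnum : 0 ≤ 1 - Real.exp (-(κ*w)) := one_sub_exp_nonneg hκ hw0.le
      have hpow : 0 < w ^ ((3:ℝ)/2) := Real.rpow_pos_of_pos hw0 _
      simp only [hh]
      rw [Real.norm_eq_abs, abs_of_nonneg (div_nonneg hnum hpow.le)]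
      show (1 - Real.exp (-(κ*w))) / w ^ ((3:ℝ)/2) ≤ _
      rw [Real.rpow_neg hw0.le, div_le_iff₀ hpow, inv_mul_cancel₀ (ne_of_gt hpow)]
      have : Real.exp (-(κ*w)) > 0 := Real.exp_pos _
      linarith

lemma EE_integrableOn {κ : ℝ} (hκ : 0 < κ) : IntegrableOn (EE κ) (Ioi 0) := by
  have hmeas : ∀ s ⊆ Ioi (0:ℝ), MeasurableSet s → AEStronglyMeasurable (EE κ) (volume.restrict s) := by
    intro s hs hsm
    have hcont : ContinuousOn (EE κ) (Ioi 0) := by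
      apply ContinuousOn.div
      · fun_prop
      · fun_prop
      · intro x hx
        exact ne_of_gt (Real.sqrt_pos.2 hx)
    exact ((hcont.mono hs).aestronglyMeasurable hsm)
  rw [← Ioc_union_Ioi_eq_Ioi (zero_le_one (α := ℝ)), integrableOn_union]
  constructor
  · apply Integrable.mono' (g := fun w => w ^ (-(1/2):ℝ))
    · have := (intervalIntegral.intervalIntegrable_rpow' (a := 0) (b := 1)
        (r := -(1/2)) (by norm_num))
      rwa [intervalIntegrable_iff_integrableOn_Ioc_of_le zero_le_one] at this
    · exact hmeas _ (fun x hx => hx.1) measurableSet_Ioc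
    · filter_upwards [ae_restrict_mem measurableSet_Ioc] with w hw
      have hw0 : 0 < w := hw.1
      have hs0 : 0 < Real.sqrt w := Real.sqrt_pos.2 hw0
      simp only [EE]
      rw [Real.norm_eq_abs, abs_of_nonneg (div_nonneg (Real.exp_pos _).le (Real.sqrt_nonneg _))]
      show Real.exp (-(κ*w)) / Real.sqrt w ≤ _
      rw [Real.rpow_neg hw0.le, ← Real.sqrt_eq_rpow, div_le_iff₀ hs0,
        inv_mul_cancel₀ (ne_of_gt hs0)]
      exact Real.exp_le_one_iff.2 (by nlinarith)
  · apply Integrable.mono' (g := fun w => Real.exp (-κ * w))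
    · exact exp_neg_integrableOn_Ioi 1 hκ
    · exact hmeas _ (fun x hx => mem_Ioi.2 (lt_trans one_pos hx)) measurableSet_Ioi
    · filter_upwards [ae_restrict_mem measurableSet_Ioi] with w hw
      have hw0 : (0:ℝ) < w := lt_trans one_pos hw
      have hw1 : (1:ℝ) < w := hw
      have hs1 : 1 ≤ Real.sqrt w := by
        nlinarith [Real.sq_sqrt hw0.le, Real.sqrt_nonneg w]
      simp only [EE]
      rw [Real.norm_eq_abs, abs_of_nonneg (div_nonneg (Real.exp_pos _).le (Real.sqrt_nonneg _))]
      show Real.exp (-(κ*w)) / Real.sqrt w ≤ _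
      rw [neg_mul]
      calc Real.exp (-(κ*w)) / Real.sqrt w ≤ Real.exp (-(κ*w)) / 1 := by
            apply div_le_div_of_nonneg_left (Real.exp_pos _).le one_pos hs1
        _ = Real.exp (-(κ*w)) := by rw [div_one]

lemma EE_integral {κ : ℝ} (hκ : 0 < κ) :
    ∫ w in Ioi (0:ℝ), EE κ w = Real.sqrt π / Real.sqrt κ := by
  have hG : ∫ x in Ioi (0:ℝ), Real.exp (-x) * x ^ ((1:ℝ)/2 - 1) = Real.sqrt π := by
    rw [← Real.Gamma_eq_integral one_half_pos, Real.Gamma_one_half_eq]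
  have hsub : ∫ w in Ioi (0:ℝ), Real.exp (-(κ*w)) * (κ*w) ^ ((1:ℝ)/2 - 1)
      = κ⁻¹ * Real.sqrt π := by
    have := integral_comp_mul_left_Ioi (fun x => Real.exp (-x) * x ^ ((1:ℝ)/2 - 1)) 0 hκ
    simp only [mul_zero] at this
    rw [this, hG, smul_eq_mul]
  have heq : ∀ w ∈ Ioi (0:ℝ),
      EE κ w = Real.sqrt κ * (Real.exp (-(κ*w)) * (κ*w) ^ ((1:ℝ)/2 - 1)) := by
    intro w hw
    have hw0 : (0:ℝ) < w := hw
    have hκw : (0:ℝ) < κ * w := by positivity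
    have : (κ*w) ^ ((1:ℝ)/2 - 1) = (Real.sqrt (κ*w))⁻¹ := by
      rw [show (1:ℝ)/2 - 1 = -(1/2) by norm_num, Real.rpow_neg hκw.le, ← Real.sqrt_eq_rpow]
    rw [this, Real.sqrt_mul hκ.le]
    simp only [EE]
    have h1 : 0 < Real.sqrt κ := Real.sqrt_pos.2 hκ
    have h2 : 0 < Real.sqrt w := Real.sqrt_pos.2 hw0
    field_simp
  rw [setIntegral_congr_fun measurableSet_Ioi heq, integral_const_mul, hsub]
  have h1 : 0 < Real.sqrt κ := Real.sqrt_pos.2 hκ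
  have h2 : Real.sqrt κ * Real.sqrt κ = κ := Real.mul_self_sqrt hκ.le
  field_simp
  nlinarith [Real.sqrt_nonneg π]

noncomputable def DD (κ w : ℝ) : ℝ := -2 * (1 - Real.exp (-(κ*w))) / Real.sqrt w

lemma DD_hasDeriv {κ w : ℝ} (hw : 0 < w) :
    HasDerivAt (DD κ) (hh κ w - 2*κ * EE κ w) w := by
  have hexp : HasDerivAt (fun w : ℝ => Real.exp (-(κ*w))) (Real.exp (-(κ*w)) * -κ) w := by
    have h1 : HasDerivAt (fun w : ℝ => -(κ*w)) (-κ) w := by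
      simpa [Pi.neg_def] using ((hasDerivAt_id w).const_mul κ).neg
    exact (Real.hasDerivAt_exp _).comp w h1
  have hnum : HasDerivAt (fun w : ℝ => -2 * (1 - Real.exp (-(κ*w))))
      (-2 * (κ * Real.exp (-(κ*w)))) w := by
    have := (hexp.const_sub 1).const_mul (-2)
    refine this.congr_deriv (Eq.symm ?_)
    ring
  have hs : HasDerivAt Real.sqrt (1 / (2 * Real.sqrt w)) w := Real.hasDerivAt_sqrt hw.ne'
  have hs0 : 0 < Real.sqrt w := Real.sqrt_pos.2 hw
  have H := hnum.div hs (ne_of_gt hs0)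
  refine H.congr_deriv (Eq.symm ?_)
  have hs2 : Real.sqrt w ^ 2 = w := Real.sq_sqrt hw.le
  simp only [hh, EE]
  rw [rpow_th hw]
  set s := Real.sqrt w with hsdef
  set e := Real.exp (-(κ*w)) with hedef
  rw [show w = s^2 from hs2.symm]
  have he0 : 0 < e := Real.exp_pos _
  field_simp
  ring

lemma DD_cont0 {κ : ℝ} (hκ : 0 ≤ κ) : ContinuousWithinAt (DD κ) (Ici 0) 0 := by
  have hD0 : DD κ 0 = 0 := by simp [DD]
  rw [ContinuousWithinAt, hD0]
  apply squeeze_zero_norm' (a := fun w => 2 * κ * Real.sqrt w)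
  · filter_upwards [self_mem_nhdsWithin] with w (hw : (0:ℝ) ≤ w)
    rcases hw.eq_or_lt with rfl|hw0
    · simp [DD]
    · have hs0 : 0 < Real.sqrt w := Real.sqrt_pos.2 hw0
      have hnum : 0 ≤ 1 - Real.exp (-(κ*w)) := one_sub_exp_nonneg hκ hw0.le
      have hDneg : DD κ w ≤ 0 := by
        simp only [DD]
        apply div_nonpos_of_nonpos_of_nonneg (by linarith) hs0.le
      rw [Real.norm_eq_abs, abs_of_nonpos hDneg]
      simp only [DD]
      rw [show -(-2 * (1 - Real.exp (-(κ*w))) / Real.sqrt w)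
          = 2 * (1 - Real.exp (-(κ*w))) / Real.sqrt w by ring, div_le_iff₀ hs0]
      have h2 : 1 - Real.exp (-(κ*w)) ≤ κ * w := one_sub_exp_le
      nlinarith [Real.sq_sqrt hw0.le]
  · have : Tendsto (fun w : ℝ => 2 * κ * Real.sqrt w) (𝓝 0) (𝓝 (2 * κ * Real.sqrt 0)) := by
      exact (continuous_const.mul Real.continuous_sqrt).tendsto 0
    simp only [Real.sqrt_zero, mul_zero] at this
    exact this.mono_left nhdsWithin_le_nhds

lemma DD_tendsto {κ : ℝ} (hκ : 0 ≤ κ) : Tendsto (DD κ) atTop (𝓝 0) := by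
  apply squeeze_zero_norm' (a := fun w => 2 / Real.sqrt w)
  · filter_upwards [eventually_gt_atTop (0:ℝ)] with w hw0
    have hs0 : 0 < Real.sqrt w := Real.sqrt_pos.2 hw0
    have hnum : 0 ≤ 1 - Real.exp (-(κ*w)) := one_sub_exp_nonneg hκ hw0.le
    have hexp : 0 < Real.exp (-(κ*w)) := Real.exp_pos _
    have hDneg : DD κ w ≤ 0 := by
      simp only [DD]
      apply div_nonpos_of_nonpos_of_nonneg (by linarith) hs0.le
    rw [Real.norm_eq_abs, abs_of_nonpos hDneg]
    simp only [DD]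
    rw [show -(-2 * (1 - Real.exp (-(κ*w))) / Real.sqrt w)
        = 2 * (1 - Real.exp (-(κ*w))) / Real.sqrt w by ring, div_le_div_iff₀ hs0 hs0]
    nlinarith
  · have hsq : Tendsto Real.sqrt atTop atTop := by
      apply (tendsto_rpow_atTop one_half_pos).congr'
      filter_upwards [eventually_ge_atTop (0:ℝ)] with w hw
      rw [← Real.sqrt_eq_rpow]
    have := hsq.inv_tendsto_atTop.const_mul (2:ℝ)
    simpa [div_eq_mul_inv] using this

lemma hh_integral {κ : ℝ} (hκ : 0 < κ) :
    ∫ w in Ioi (0:ℝ), hh κ w = 2 * Real.sqrt (π * κ) := by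
  have hφint : IntegrableOn (fun w => hh κ w - 2*κ * EE κ w) (Ioi 0) :=
    (hh_integrableOn hκ.le).sub ((EE_integrableOn hκ).const_mul _)
  have hFTC := integral_Ioi_of_hasDerivAt_of_tendsto (DD_cont0 hκ.le)
    (fun x hx => DD_hasDeriv hx) hφint (DD_tendsto hκ.le)
  have hD0 : DD κ 0 = 0 := by simp [DD]
  rw [hD0, zero_sub, neg_zero] at hFTC
  have hsplit := integral_sub (hh_integrableOn hκ.le) ((EE_integrableOn hκ).const_mul (2*κ))
  rw [hsplit] at hFTC
  rw [integral_const_mul, EE_integral hκ] at hFTC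
  have h1 : 0 < Real.sqrt κ := Real.sqrt_pos.2 hκ
  have h2 : Real.sqrt κ * Real.sqrt κ = κ := Real.mul_self_sqrt hκ.le
  have : ∫ w in Ioi (0:ℝ), hh κ w = 2 * κ * (Real.sqrt π / Real.sqrt κ) := by linarith
  rw [this, Real.sqrt_mul Real.pi_pos.le]
  field_simp
  nlinarith [Real.sqrt_nonneg π]


/-- The integral `∫_0^∞ (1 − √(1+w) e^{−κw})/(w^{3/2} √(1+w)) dw`
converges absolutely for every `κ ≥ 0` and equals `2√(πκ) − 2`.  In particular,
for `a, b > 0` and `x ∈ [0,a]`, with `κ = b(a−x)²/(2a)`,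
`√(a/(2πb)) ∫_0^∞ (1 − √(1+w) e^{−bw(a−x)²/(2a)})/(w^{3/2} √(1+w)) dw
  = (a−x) − √(2a/(πb))`. -/
theorem integral_one_sub_sqrt_exp :
    (∀ κ : ℝ, 0 ≤ κ →
      IntegrableOn
        (fun w : ℝ => (1 - Real.sqrt (1 + w) * Real.exp (-(κ * w)))
            / (w ^ ((3 : ℝ) / 2) * Real.sqrt (1 + w))) (Ioi 0) ∧
      (∫ w in Ioi (0 : ℝ), (1 - Real.sqrt (1 + w) * Real.exp (-(κ * w)))
            / (w ^ ((3 : ℝ) / 2) * Real.sqrt (1 + w)))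
        = 2 * Real.sqrt (π * κ) - 2) ∧
    (∀ a b x : ℝ, 0 < a → 0 < b → x ∈ Icc 0 a →
      Real.sqrt (a / (2 * π * b)) *
          (∫ w in Ioi (0 : ℝ),
            (1 - Real.sqrt (1 + w) * Real.exp (-(b * w * (a - x) ^ 2 / (2 * a))))
              / (w ^ ((3 : ℝ) / 2) * Real.sqrt (1 + w)))
        = (a - x) - Real.sqrt (2 * a / (π * b))) := by
  
  have part1 : ∀ κ : ℝ, 0 ≤ κ →
      IntegrableOn
        (fun w : ℝ => (1 - Real.sqrt (1 + w) * Real.exp (-(κ * w)))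
            / (w ^ ((3 : ℝ) / 2) * Real.sqrt (1 + w))) (Ioi 0) ∧
      (∫ w in Ioi (0 : ℝ), (1 - Real.sqrt (1 + w) * Real.exp (-(κ * w)))
            / (w ^ ((3 : ℝ) / 2) * Real.sqrt (1 + w)))
        = 2 * Real.sqrt (π * κ) - 2 := by
    intro κ hκ
    have hhint : IntegrableOn (hh κ) (Ioi 0) := hh_integrableOn hκ
    have hhval : ∫ w in Ioi (0:ℝ), hh κ w = 2 * Real.sqrt (π * κ) := by
      rcases hκ.eq_or_lt with rfl|h
      · have hz : hh 0 = fun _ => (0:ℝ) := funext fun w => by simp [hh]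
        rw [hz]
        simp
      · exact hh_integral h
    have heq : ∀ w ∈ Ioi (0:ℝ),
        (1 - Real.sqrt (1 + w) * Real.exp (-(κ * w)))
            / (w ^ ((3 : ℝ) / 2) * Real.sqrt (1 + w)) = gg w + hh κ w := by
      intro w hw
      have hw0 : (0:ℝ) < w := hw
      have hpow : 0 < w ^ ((3:ℝ)/2) := Real.rpow_pos_of_pos hw0 _
      have ht0 : 0 < Real.sqrt (1+w) := Real.sqrt_pos.2 (by linarith)
      simp only [gg, hh]
      field_simp
      ring
    constructor
    · exact IntegrableOn.congr_fun (gg_integrableOn.add hhint)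
        (fun w hw => (heq w hw).symm) measurableSet_Ioi
    · rw [setIntegral_congr_fun measurableSet_Ioi heq,
        integral_add gg_integrableOn hhint, gg_integral, hhval]
      ring
  refine ⟨part1, ?_⟩
  intro a b x ha hb hx
  obtain ⟨hx0, hxa⟩ := hx
  have hπ := Real.pi_pos
  set κ := b * (a - x)^2 / (2*a) with hκdef
  have hκ0 : 0 ≤ κ := by positivity
  have key := (part1 κ hκ0).2
  have hfun : (fun w : ℝ => (1 - Real.sqrt (1 + w) * Real.exp (-(b * w * (a - x) ^ 2 / (2 * a))))
              / (w ^ ((3 : ℝ) / 2) * Real.sqrt (1 + w)))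
      = (fun w : ℝ => (1 - Real.sqrt (1 + w) * Real.exp (-(κ * w)))
              / (w ^ ((3 : ℝ) / 2) * Real.sqrt (1 + w))) := by
    funext w
    rw [show b * w * (a - x) ^ 2 / (2 * a) = κ * w by rw [hκdef]; ring]
  rw [hfun, key]
  have ha' : a ≠ 0 := ne_of_gt ha
  have hb' : b ≠ 0 := ne_of_gt hb
  have hπ' : π ≠ 0 := ne_of_gt hπ
  have h1 : Real.sqrt (a/(2*π*b)) * Real.sqrt (π*κ) = (a-x)/2 := by
    rw [← Real.sqrt_mul (by positivity)]
    rw [show a/(2*π*b) * (π*κ) = ((a-x)/2)^2 by rw [hκdef]; field_simp]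
    exact Real.sqrt_sq (by linarith)
  have h2 : 2 * Real.sqrt (a/(2*π*b)) = Real.sqrt (2*a/(π*b)) := by
    have h4 : Real.sqrt 4 = 2 := by
      rw [show (4:ℝ) = 2^2 by norm_num, Real.sqrt_sq (by norm_num : (0:ℝ) ≤ 2)]
    calc 2 * Real.sqrt (a/(2*π*b)) = Real.sqrt 4 * Real.sqrt (a/(2*π*b)) := by rw [h4]
      _ = Real.sqrt (4*(a/(2*π*b))) := (Real.sqrt_mul (by norm_num) _).symm
      _ = Real.sqrt (2*a/(π*b)) := by congr 1; field_simp; ring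
  linear_combination 2*h1 - h2
end

section
/- Let 0 < b₀ ≤ b₁ < ∞. There exists a constant C < ∞, depending only on b₀ and b₁, such that for all a ≥ 1, all b ∈ [b₀, b₁] and all x ∈ [0,a]: √a · ∫_0^∞ e^{−b w (a−x)²/(2a)} · w^{−3/2} · min(w,1)/max(bx,1) dw ≤ C · max(a−x, 1)/√a. -/
open Real Set MeasureTheory

lemma remainder_aux_intOn1 :
    IntegrableOn (fun w : ℝ => w ^ (-(3:ℝ)/2) * min w 1) (Ioc (0:ℝ) 1) := by
  have h : IntegrableOn (fun w : ℝ => w ^ (-(1:ℝ)/2)) (Ioc (0:ℝ) 1) :=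
    (intervalIntegrable_iff_integrableOn_Ioc_of_le (by norm_num)).1
      (intervalIntegral.intervalIntegrable_rpow' (by norm_num))
  refine h.congr_fun (fun w hw => ?_) measurableSet_Ioc
  have hw0 : (0:ℝ) < w := hw.1
  have hmin : min w 1 = w := min_eq_left hw.2
  beta_reduce
  rw [hmin, show (-(1:ℝ))/2 = -(3:ℝ)/2 + 1 by norm_num, Real.rpow_add_one hw0.ne']

lemma remainder_aux_intOn2 :
    IntegrableOn (fun w : ℝ => w ^ (-(3:ℝ)/2) * min w 1) (Ioi (1:ℝ)) := by
  have h : IntegrableOn (fun w : ℝ => w ^ (-(3:ℝ)/2)) (Ioi (1:ℝ)) :=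
    integrableOn_Ioi_rpow_of_lt (by norm_num) one_pos
  refine h.congr_fun (fun w hw => ?_) measurableSet_Ioi
  rw [min_eq_right (le_of_lt hw), mul_one]

lemma remainder_aux_integrable :
    IntegrableOn (fun w : ℝ => w ^ (-(3:ℝ)/2) * min w 1) (Ioi (0:ℝ)) := by
  rw [← Ioc_union_Ioi_eq_Ioi (zero_le_one (α := ℝ))]
  exact remainder_aux_intOn1.union remainder_aux_intOn2

lemma remainder_aux_integral :
    (∫ w in Ioi (0:ℝ), w ^ (-(3:ℝ)/2) * min w 1) = 4 := by
  rw [← Ioc_union_Ioi_eq_Ioi (zero_le_one (α := ℝ)),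
    setIntegral_union Ioc_disjoint_Ioi_same measurableSet_Ioi
      remainder_aux_intOn1 remainder_aux_intOn2]
  have h1 : (∫ w in Ioc (0:ℝ) 1, w ^ (-(3:ℝ)/2) * min w 1) = 2 := by
    have he : (∫ w in Ioc (0:ℝ) 1, w ^ (-(3:ℝ)/2) * min w 1)
        = ∫ w in Ioc (0:ℝ) 1, w ^ (-(1:ℝ)/2) := by
      refine setIntegral_congr_fun measurableSet_Ioc (fun w hw => ?_)
      have hw0 : (0:ℝ) < w := hw.1
      rw [min_eq_left hw.2, show (w:ℝ) ^ (-(3:ℝ)/2) * w = w ^ (-(3:ℝ)/2 + 1) from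
        (Real.rpow_add_one hw0.ne' _).symm]
      norm_num
    rw [he, ← intervalIntegral.integral_of_le (zero_le_one)]
    rw [integral_rpow (Or.inl (by norm_num))]
    norm_num
  have h2 : (∫ w in Ioi (1:ℝ), w ^ (-(3:ℝ)/2) * min w 1) = 2 := by
    have he : (∫ w in Ioi (1:ℝ), w ^ (-(3:ℝ)/2) * min w 1)
        = ∫ w in Ioi (1:ℝ), w ^ (-(3:ℝ)/2) := by
      refine setIntegral_congr_fun measurableSet_Ioi (fun w hw => ?_)
      rw [min_eq_right (le_of_lt hw), mul_one]
    rw [he, integral_Ioi_rpow_of_lt (by norm_num) one_pos]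
    norm_num
  rw [h1, h2]; norm_num

/-- Integral bound controlling the contribution of the Bessel
remainder: there is `C < ∞` (depending only on `b₀, b₁`) such that for all `a ≥ 1`,
`b ∈ [b₀, b₁]` and `x ∈ [0,a]`,
`√a ∫_0^∞ e^{−bw(a−x)²/(2a)} w^{−3/2} min(w,1)/max(bx,1) dw ≤ C max(a−x,1)/√a`. -/
theorem integral_remainder_bound (b₀ b₁ : ℝ) (hb₀ : 0 < b₀) (hb : b₀ ≤ b₁) :
    ∃ C : ℝ, 0 ≤ C ∧
      ∀ a : ℝ, 1 ≤ a → ∀ b ∈ Icc b₀ b₁, ∀ x ∈ Icc (0 : ℝ) a,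
        Real.sqrt a *
            (∫ w in Ioi (0 : ℝ),
              Real.exp (-(b * w * (a - x) ^ 2 / (2 * a))) * w ^ (-(3 : ℝ) / 2) *
                (min w 1 / max (b * x) 1))
          ≤ C * max (a - x) 1 / Real.sqrt a := by
  refine ⟨8 * max 1 (1 / b₀), by positivity, ?_⟩
  intro a ha b hbmem x hxmem
  set C : ℝ := 8 * max 1 (1 / b₀) with hC
  set M : ℝ := max (b * x) 1 with hMdef
  set N : ℝ := max (a - x) 1 with hNdef
  have hb0 : 0 < b := lt_of_lt_of_le hb₀ hbmem.1
  have hx0 : 0 ≤ x := hxmem.1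
  have hxa : x ≤ a := hxmem.2
  have hM1 : (1:ℝ) ≤ M := le_max_right _ _
  have hM0 : (0:ℝ) < M := lt_of_lt_of_le one_pos hM1
  have hN1 : (1:ℝ) ≤ N := le_max_right _ _
  have ha0 : (0:ℝ) < a := lt_of_lt_of_le one_pos ha
  -- Step 1: bound the integral by 4 / M
  have hbound :
      (∫ w in Ioi (0 : ℝ),
        Real.exp (-(b * w * (a - x) ^ 2 / (2 * a))) * w ^ (-(3 : ℝ) / 2) *
          (min w 1 / M)) ≤ 4 / M := by
    have hgi : Integrable (fun w : ℝ => w ^ (-(3:ℝ)/2) * min w 1 / M)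
        (volume.restrict (Ioi (0:ℝ))) := remainder_aux_integrable.div_const M
    have hle : (∫ w in Ioi (0 : ℝ),
        Real.exp (-(b * w * (a - x) ^ 2 / (2 * a))) * w ^ (-(3 : ℝ) / 2) *
          (min w 1 / M)) ≤ ∫ w in Ioi (0:ℝ), w ^ (-(3:ℝ)/2) * min w 1 / M := by
      refine integral_mono_of_nonneg ?_ hgi ?_
      · refine (ae_restrict_iff' measurableSet_Ioi).2 (ae_of_all _ fun w hw => ?_)
        have hw0 : (0:ℝ) < w := hw
        have h1 : (0:ℝ) ≤ w ^ (-(3:ℝ)/2) := Real.rpow_nonneg hw0.le _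
        have h2 : (0:ℝ) ≤ min w 1 / M := div_nonneg (le_min hw0.le one_pos.le |>.trans (le_refl _) |> fun h => (lt_min hw0 one_pos).le) hM0.le
        positivity
      · refine (ae_restrict_iff' measurableSet_Ioi).2 (ae_of_all _ fun w hw => ?_)
        have hw0 : (0:ℝ) < w := hw
        have hexp : Real.exp (-(b * w * (a - x) ^ 2 / (2 * a))) ≤ 1 := by
          apply Real.exp_le_one_iff.2
          have : 0 ≤ b * w * (a - x) ^ 2 / (2 * a) := by positivity
          linarith
        have h1 : (0:ℝ) ≤ w ^ (-(3:ℝ)/2) := Real.rpow_nonneg hw0.le _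
        have h2 : (0:ℝ) ≤ min w 1 / M := div_nonneg (lt_min hw0 one_pos).le hM0.le
        calc Real.exp (-(b * w * (a - x) ^ 2 / (2 * a))) * w ^ (-(3 : ℝ) / 2) *
              (min w 1 / M)
            ≤ 1 * w ^ (-(3 : ℝ) / 2) * (min w 1 / M) := by
              apply mul_le_mul_of_nonneg_right
              exact mul_le_mul_of_nonneg_right hexp h1
              exact h2
          _ = w ^ (-(3:ℝ)/2) * min w 1 / M := by ring
    calc _ ≤ ∫ w in Ioi (0:ℝ), w ^ (-(3:ℝ)/2) * min w 1 / M := hle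
      _ = (∫ w in Ioi (0:ℝ), w ^ (-(3:ℝ)/2) * min w 1) / M := integral_div _ _
      _ = 4 / M := by rw [remainder_aux_integral]
  -- Step 2: arithmetic
  have hsa : (0:ℝ) < Real.sqrt a := Real.sqrt_pos.2 ha0
  have hkey : 4 * a ≤ C * N * M := by
    rcases le_or_gt x (a / 2) with hxle | hxgt
    · have hNge : a / 2 ≤ N := le_trans (by linarith) (le_max_left (a - x) 1)
      have hC8 : (8:ℝ) ≤ C := by
        have := le_max_left (1:ℝ) (1 / b₀)
        nlinarith
      have h1 : 8 * (a / 2) ≤ C * N := mul_le_mul hC8 hNge (by linarith) (by linarith)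
      have h2 : C * N ≤ C * N * M := le_mul_of_one_le_right (by nlinarith) hM1
      nlinarith
    · have hMge : b₀ * a / 2 ≤ M := by
        have h1 : b₀ * x ≤ b * x := mul_le_mul_of_nonneg_right hbmem.1 hx0
        have h2 : b₀ * (a / 2) ≤ b₀ * x := mul_le_mul_of_nonneg_left hxgt.le hb₀.le
        calc b₀ * a / 2 = b₀ * (a / 2) := by ring
          _ ≤ b * x := by linarith
          _ ≤ M := le_max_left _ _
      have hCb : 8 / b₀ ≤ C := by
        have h := le_max_right (1:ℝ) (1 / b₀)
        calc 8 / b₀ = 8 * (1 / b₀) := by ring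
          _ ≤ 8 * max 1 (1 / b₀) := by nlinarith
          _ = C := rfl
      have hC0 : (0:ℝ) ≤ C := by positivity
      have h1 : (8 / b₀) * (b₀ * a / 2) ≤ C * M :=
        mul_le_mul hCb hMge (by positivity) hC0
      have h2 : (8 / b₀) * (b₀ * a / 2) = 4 * a := by field_simp; ring
      have h3 : C * M ≤ C * M * N :=
        le_mul_of_one_le_right (by positivity) hN1
      nlinarith
  calc Real.sqrt a * (∫ w in Ioi (0 : ℝ),
        Real.exp (-(b * w * (a - x) ^ 2 / (2 * a))) * w ^ (-(3 : ℝ) / 2) *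
          (min w 1 / M))
      ≤ Real.sqrt a * (4 / M) :=
        mul_le_mul_of_nonneg_left hbound hsa.le
    _ ≤ C * N / Real.sqrt a := by
        rw [mul_div_assoc' (Real.sqrt a) 4 M, div_le_div_iff₀ hM0 hsa]
        have hss : Real.sqrt a * Real.sqrt a = a := Real.mul_self_sqrt ha0.le
        calc Real.sqrt a * 4 * Real.sqrt a = 4 * (Real.sqrt a * Real.sqrt a) := by ring
          _ = 4 * a := by rw [hss]
          _ ≤ C * N * M := hkey
end
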